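/- arXiv:1605.08435 — 4 statements merged into one kernel-verified Lean document; each statement's English description precedes it below -/
import Mathlib

section
/- Let C be a triangulated category with a weight structure w, M an object of C, and j < i integers. Fix weight decompositions w_{≤j}M → M → w_{≥j+1}M and w_{≤i}M → M → w_{≥i+1}M (so w_{≤j}M ∈ C_{w≤j}, w_{≥j+1}M ∈ C_{w≥j+1}, and similarly for i). Then there exists a unique morphism c : w_{≤j}M → w_{≤i}M commuting with the two maps to M; moreover, the cone of c lies in C_{[j+1,i]} = C_{w≥j+1} ∩ C_{w≤i}. -/
open CategoryTheory CategoryTheory.Limits CategoryTheory.Pretriangulated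

universe v u v₂ u₂

/-- `X` is a retract of `Y`: the identity of `X` factors through `Y`. -/
def IsRetract {C : Type u} [Category.{v} C] (X Y : C) : Prop :=
  ∃ (i : X ⟶ Y) (r : Y ⟶ X), i ≫ r = 𝟙 X

variable (C : Type u) [Category.{v} C] [HasZeroObject C] [Preadditive C] [HasShift C ℤ]
  [∀ n : ℤ, (shiftFunctor C n).Additive] [Pretriangulated C]

/-- A weight structure on a triangulated category `C`, given by the classes
`LE = C_{w≤0}` and `GE = C_{w≥0}`. -/
structure WeightStructure where
  LE : Set C
  GE : Set C
  retract_mem_LE : ∀ ⦃X Y : C⦄, IsRetract X Y → Y ∈ LE → X ∈ LE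
  retract_mem_GE : ∀ ⦃X Y : C⦄, IsRetract X Y → Y ∈ GE → X ∈ GE
  shift_LE : ∀ X ∈ LE, X⟦(-1 : ℤ)⟧ ∈ LE
  shift_GE : ∀ X ∈ GE, X⟦(1 : ℤ)⟧ ∈ GE
  orthogonal : ∀ ⦃X Y : C⦄, X ∈ LE → Y ∈ GE → ∀ f : X ⟶ Y⟦(1 : ℤ)⟧, f = 0
  exists_decomp : ∀ M : C, ∃ (B A : C) (f : B ⟶ M) (g : M ⟶ A) (h : A ⟶ B⟦(1 : ℤ)⟧),
    (Triangle.mk f g h ∈ distTriang C) ∧ B ∈ LE ∧ A⟦(-1 : ℤ)⟧ ∈ GE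

namespace WeightStructure

variable {C}

/-- `C_{w≤n} = C_{w≤0}[n]`. -/
def le (w : WeightStructure C) (n : ℤ) : Set C := {X : C | X⟦(-n)⟧ ∈ w.LE}

/-- `C_{w≥n} = C_{w≥0}[n]`. -/
def ge (w : WeightStructure C) (n : ℤ) : Set C := {X : C | X⟦(-n)⟧ ∈ w.GE}

/-- `C_{w=n} = C_{w≤n} ∩ C_{w≥n}`. -/
def heart (w : WeightStructure C) (n : ℤ) : Set C := w.le n ∩ w.ge n

end WeightStructure

variable {C}

/-- The envelope of a class `D`: the smallest class containing `D` and all zero objects that is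
closed under extensions and retracts. -/
inductive Envelope (D : Set C) : C → Prop
  | of (X : C) (hX : X ∈ D) : Envelope D X
  | zero (Z : C) (hZ : IsZero Z) : Envelope D Z
  | ext (T : Triangle C) (hT : T ∈ distTriang C)
      (h₁ : Envelope D T.obj₁) (h₃ : Envelope D T.obj₃) : Envelope D T.obj₂
  | retract (X Y : C) (h : IsRetract X Y) (hY : Envelope D Y) : Envelope D X

namespace WeightStructure

lemma mem_LE_of_iso (w : WeightStructure C) {X Y : C} (e : X ≅ Y) (h : Y ∈ w.LE) : X ∈ w.LE :=
  w.retract_mem_LE ⟨e.hom, e.inv, e.hom_inv_id⟩ h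

lemma mem_GE_of_iso (w : WeightStructure C) {X Y : C} (e : X ≅ Y) (h : Y ∈ w.GE) : X ∈ w.GE :=
  w.retract_mem_GE ⟨e.hom, e.inv, e.hom_inv_id⟩ h

lemma mem_le_of_iso (w : WeightStructure C) {n : ℤ} {X Y : C} (e : X ≅ Y) (h : Y ∈ w.le n) :
    X ∈ w.le n :=
  w.mem_LE_of_iso ((shiftFunctor C (-n)).mapIso e) h

lemma mem_ge_of_iso (w : WeightStructure C) {n : ℤ} {X Y : C} (e : X ≅ Y) (h : Y ∈ w.ge n) :
    X ∈ w.ge n :=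
  w.mem_GE_of_iso ((shiftFunctor C (-n)).mapIso e) h

lemma retract_mem_le (w : WeightStructure C) {n : ℤ} {X Y : C} (h : IsRetract X Y)
    (hY : Y ∈ w.le n) : X ∈ w.le n := by
  obtain ⟨i, r, hir⟩ := h
  exact w.retract_mem_LE ⟨i⟦(-n)⟧', r⟦(-n)⟧', by
    rw [← Functor.map_comp, hir, CategoryTheory.Functor.map_id]⟩ hY

lemma retract_mem_ge (w : WeightStructure C) {n : ℤ} {X Y : C} (h : IsRetract X Y)
    (hY : Y ∈ w.ge n) : X ∈ w.ge n := by
  obtain ⟨i, r, hir⟩ := h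
  exact w.retract_mem_GE ⟨i⟦(-n)⟧', r⟦(-n)⟧', by
    rw [← Functor.map_comp, hir, CategoryTheory.Functor.map_id]⟩ hY

/-- Orthogonality with weights: `Hom(C_{w≤n}, C_{w≥n+1}) = 0`. -/
lemma hom_zero (w : WeightStructure C) {n : ℤ} {X Y : C} (hX : X ∈ w.le n)
    (hY : Y ∈ w.ge (n + 1)) (f : X ⟶ Y) : f = 0 := by
  have e := (shiftFunctorAdd' C (-(n+1)) 1 (-n) (by omega)).app Y
  have h0 : (shiftFunctor C (-n)).map f ≫ e.hom = 0 := w.orthogonal hX hY _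
  have : (shiftFunctor C (-n)).map f = 0 := by
    rw [← cancel_mono e.hom, h0, zero_comp]
  apply (shiftFunctor C (-n)).map_injective
  rw [this, Functor.map_zero]

lemma le_succ (w : WeightStructure C) (n : ℤ) : w.le n ⊆ w.le (n + 1) := fun X hX =>
  w.mem_LE_of_iso ((shiftFunctorAdd' C (-n) (-1) (-(n+1)) (by omega)).app X)
    (w.shift_LE _ hX)

lemma ge_pred (w : WeightStructure C) (n : ℤ) : w.ge (n + 1) ⊆ w.ge n := fun X hX =>
  w.mem_GE_of_iso ((shiftFunctorAdd' C (-(n+1)) 1 (-n) (by omega)).app X)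
    (w.shift_GE _ hX)

lemma le_mono (w : WeightStructure C) {n m : ℤ} (h : n ≤ m) : w.le n ⊆ w.le m :=
  Int.le_induction (motive := fun k _ => w.le n ⊆ w.le k) subset_rfl
    (fun k _ ih => ih.trans (w.le_succ k)) m h

lemma ge_anti (w : WeightStructure C) {n m : ℤ} (h : n ≤ m) : w.ge m ⊆ w.ge n :=
  Int.le_induction (motive := fun k _ => w.ge k ⊆ w.ge n) subset_rfl
    (fun k _ ih => (w.ge_pred k).trans ih) m h

lemma shift_one_mem_le (w : WeightStructure C) {n : ℤ} {X : C} (h : X ∈ w.le n) :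
    X⟦(1 : ℤ)⟧ ∈ w.le (n + 1) :=
  w.mem_LE_of_iso ((shiftFunctorAdd' C 1 (-(n+1)) (-n) (by omega)).symm.app X) h

lemma shift_neg_one_mem_ge (w : WeightStructure C) {n : ℤ} {X : C} (h : X ∈ w.ge (n + 1)) :
    X⟦(-1 : ℤ)⟧ ∈ w.ge n :=
  w.mem_GE_of_iso ((shiftFunctorAdd' C (-1) (-n) (-(n+1)) (by omega)).symm.app X) h

/-- Weight decompositions exist at every level. -/
lemma exists_decomp_level (w : WeightStructure C) (M : C) (n : ℤ) :
    ∃ (B A : C) (f : B ⟶ M) (g : M ⟶ A) (h : A ⟶ B⟦(1 : ℤ)⟧),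
      (Triangle.mk f g h ∈ distTriang C) ∧ B ∈ w.le n ∧ A ∈ w.ge (n + 1) := by
  obtain ⟨B', A', f', g', h', hT', hB', hA'⟩ := w.exists_decomp (M⟦(-n)⟧)
  have hT'' := Pretriangulated.Triangle.shift_distinguished _ hT' n
  set T₁ := (CategoryTheory.shiftFunctor (Triangle C) n).obj (Triangle.mk f' g' h') with hT₁def
  have e : T₁.obj₂ ≅ M := (shiftFunctorCompIsoId C (-n) n (by omega)).app M
  refine ⟨T₁.obj₁, T₁.obj₃, T₁.mor₁ ≫ e.hom, e.inv ≫ T₁.mor₂, T₁.mor₃, ?_, ?_, ?_⟩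
  · refine isomorphic_distinguished _ hT'' _ ?_
    exact Triangle.isoMk _ _ (Iso.refl _) e.symm (Iso.refl _) (by exact (Category.assoc _ _ _).trans ((congrArg (T₁.mor₁ ≫ ·) e.hom_inv_id).trans ((Category.comp_id _).trans (Category.id_comp _).symm))) (by exact Category.comp_id _) (by exact ((congrArg (T₁.mor₃ ≫ ·) (CategoryTheory.Functor.map_id _ _)).trans (Category.comp_id _)).trans (Category.id_comp _).symm)
  · exact w.mem_LE_of_iso ((shiftFunctorCompIsoId C n (-n) (by omega)).app B') hB'
  · exact w.mem_GE_of_iso ((shiftFunctorAdd' C n (-(n+1)) (-1) (by omega)).symm.app A') hA'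

/-- If `Z` is right-orthogonal to `C_{w≤n}` then `Z ∈ C_{w≥n+1}`. -/
lemma ge_of_orth (w : WeightStructure C) {n : ℤ} {Z : C}
    (h : ∀ X ∈ w.le n, ∀ f : X ⟶ Z, f = 0) : Z ∈ w.ge (n + 1) := by
  obtain ⟨B, A, f, g, hh, hT, hB, hA⟩ := w.exists_decomp_level Z n
  obtain ⟨r, hr⟩ := Pretriangulated.Triangle.yoneda_exact₂ _ hT (𝟙 Z)
    (by show f ≫ 𝟙 Z = 0; rw [h B hB f, zero_comp])
  exact w.retract_mem_ge ⟨g, r, hr.symm⟩ hA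

/-- If `Z` is left-orthogonal to `C_{w≥n+1}` then `Z ∈ C_{w≤n}`. -/
lemma le_of_orth (w : WeightStructure C) {n : ℤ} {Z : C}
    (h : ∀ Y ∈ w.ge (n + 1), ∀ f : Z ⟶ Y, f = 0) : Z ∈ w.le n := by
  obtain ⟨B, A, f, g, hh, hT, hB, hA⟩ := w.exists_decomp_level Z n
  obtain ⟨s, hs⟩ := Pretriangulated.Triangle.coyoneda_exact₂ _ hT (𝟙 Z)
    (by show 𝟙 Z ≫ g = 0; rw [Category.id_comp, h A hA g])
  exact w.retract_mem_le ⟨s, f, hs.symm⟩ hB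

end WeightStructure

theorem stmt_4 (w : WeightStructure C) (M : C) (j i : ℤ) (hji : j < i)
    (Bj Aj : C) (fj : Bj ⟶ M) (gj : M ⟶ Aj) (hj : Aj ⟶ Bj⟦(1 : ℤ)⟧)
    (hTj : Triangle.mk fj gj hj ∈ distTriang C)
    (hBj : Bj ∈ w.le j) (hAj : Aj ∈ w.ge (j + 1))
    (Bi Ai : C) (fi : Bi ⟶ M) (gi : M ⟶ Ai) (hi : Ai ⟶ Bi⟦(1 : ℤ)⟧)
    (hTi : Triangle.mk fi gi hi ∈ distTriang C)
    (hBi : Bi ∈ w.le i) (hAi : Ai ∈ w.ge (i + 1)) :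
    (∃! c : Bj ⟶ Bi, c ≫ fi = fj) ∧
    ∀ (c : Bj ⟶ Bi), c ≫ fi = fj →
      ∀ (Z : C) (u : Bi ⟶ Z) (v : Z ⟶ Bj⟦(1 : ℤ)⟧),
        (Triangle.mk c u v ∈ distTriang C) → Z ∈ w.ge (j + 1) ∧ Z ∈ w.le i := by
  have hji' : j + 1 ≤ i := hji
  have hBj_le_i : Bj ∈ w.le i := w.le_mono hji.le hBj
  have hAim : Ai⟦(-1 : ℤ)⟧ ∈ w.ge (j + 1) :=
    w.ge_anti hji' (w.shift_neg_one_mem_ge hAi)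
  -- any map `X → Bi` equal to zero after composing with `fi` is zero when `X ∈ w.le j`
  have key : ∀ (X : C), X ∈ w.le j → ∀ (t : X ⟶ Bi), t ≫ fi = 0 → t = 0 := by
    intro X hX t ht
    obtain ⟨g, hg⟩ := Pretriangulated.Triangle.coyoneda_exact₂ _
      (inv_rot_of_distTriang _ hTi) t ht
    rw [hg, w.hom_zero hX hAim g]; exact zero_comp
  constructor
  · -- existence and uniqueness of `c`
    obtain ⟨c, hc⟩ : ∃ c : Bj ⟶ Bi, fj = c ≫ fi :=
      Pretriangulated.Triangle.coyoneda_exact₂ _ hTi fj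
        (w.hom_zero hBj_le_i hAi (fj ≫ gi))
    refine ⟨c, hc.symm, fun c' hc' => ?_⟩
    have : (c' - c) ≫ fi = 0 := by
      rw [Preadditive.sub_comp, hc', ← hc, sub_self]
    have := key Bj hBj _ this
    rw [← sub_eq_zero]
    exact this
  · intro c hc Z u v hT3
    constructor
    · -- Z ∈ w.ge (j+1)
      -- first: v factors through Aj
      have hvc : v ≫ c⟦(1 : ℤ)⟧' = 0 := comp_distTriang_mor_zero₃₁ _ hT3
      have hvf : v ≫ fj⟦(1 : ℤ)⟧' = 0 := by
        rw [← hc, Functor.map_comp, ← Category.assoc, hvc, zero_comp]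
      obtain ⟨ψ, hψ⟩ := Pretriangulated.Triangle.coyoneda_exact₁ _ hTj v hvf
      refine w.ge_of_orth (fun X hX φ => ?_)
      have hφv : φ ≫ v = 0 := by
        rw [hψ]; exact (Category.assoc φ ψ _).symm.trans ((congrArg (· ≫ _) (w.hom_zero hX hAj (φ ≫ ψ))).trans zero_comp)
      obtain ⟨χ, hχ⟩ : ∃ χ : X ⟶ Bi, φ = χ ≫ u :=
        Pretriangulated.Triangle.coyoneda_exact₃ _ hT3 φ hφv
      -- χ ≫ fi factors through fj
      obtain ⟨α, hα⟩ : ∃ α : X ⟶ Bj, χ ≫ fi = α ≫ fj :=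
        Pretriangulated.Triangle.coyoneda_exact₂ _ hTj (χ ≫ fi)
          (by show (χ ≫ fi) ≫ gj = 0; rw [Category.assoc]; exact w.hom_zero hX hAj _)
      have hsub : (χ - α ≫ c) ≫ fi = 0 := by
        rw [Preadditive.sub_comp, Category.assoc, hc, hα, sub_self]
      have hχα : χ = α ≫ c := by
        have := key X hX _ hsub
        rwa [sub_eq_zero] at this
      have hcu : c ≫ u = 0 := comp_distTriang_mor_zero₁₂ _ hT3
      rw [hχ, hχα, Category.assoc, hcu, comp_zero]
    · -- Z ∈ w.le i
      refine w.le_of_orth (fun Y hY φ => ?_)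
      obtain ⟨g, hg⟩ := Pretriangulated.Triangle.yoneda_exact₃ _ hT3 φ
        (w.hom_zero hBi hY (u ≫ φ))
      rw [hg, w.hom_zero (w.le_mono hji' (w.shift_one_mem_le hBj)) hY g]; exact comp_zero
end

section
/- Let C and D be triangulated categories endowed with weight structures w and v respectively, and let F : C → D and G : D → C be exact functors with F left adjoint to G. Then F is left weight-exact (i.e., F(C_{w≤0}) ⊆ D_{v≤0}) if and only if G is right weight-exact (i.e., G(D_{v≥0}) ⊆ C_{w≥0}). -/
open CategoryTheory CategoryTheory.Limits CategoryTheory.Pretriangulated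

universe v u v₂ u₂

variable (C : Type u) [Category.{v} C] [HasZeroObject C] [Preadditive C] [HasShift C ℤ]
  [∀ n : ℤ, (shiftFunctor C n).Additive] [Pretriangulated C]

variable {C}

set_option linter.unusedSectionVars false

section Aux

variable {C : Type u} [Category.{v} C] [HasZeroObject C] [Preadditive C] [HasShift C ℤ]
  [∀ n : ℤ, (shiftFunctor C n).Additive] [Pretriangulated C]

lemma isRetract_of_iso {X Y : C} (e : X ≅ Y) : IsRetract X Y :=
  ⟨e.hom, e.inv, e.hom_inv_id⟩

/-- `A⟦-1⟧ ∈ GE` implies `A ∈ GE`. -/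
lemma mem_GE_of_shift_neg_one (w : WeightStructure C) {A : C} (hA : A⟦(-1 : ℤ)⟧ ∈ w.GE) :
    A ∈ w.GE :=
  w.retract_mem_GE (isRetract_of_iso (shiftNegShift A (1 : ℤ)).symm) (w.shift_GE _ hA)

/-- `C_{w≥0} = (C_{w≤−1})^⊥`. -/
lemma mem_GE_iff (w : WeightStructure C) (Y : C) :
    Y ∈ w.GE ↔ ∀ X ∈ w.LE, ∀ f : X ⟶ Y⟦(1 : ℤ)⟧, f = 0 := by
  constructor
  · exact fun hY X hX f => w.orthogonal hX hY f
  · intro h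
    obtain ⟨B, A, f, g, δ, hT, hB, hA⟩ := w.exists_decomp (Y⟦(1 : ℤ)⟧)
    have hf : f = 0 := h B hB f
    obtain ⟨r, hr⟩ := Triangle.yoneda_exact₂ _ hT (𝟙 _) (by rw [Category.comp_id]; exact hf)
    have hret : IsRetract (Y⟦(1 : ℤ)⟧) A := ⟨g, r, hr.symm⟩
    obtain ⟨i, r', hir⟩ := hret
    refine w.retract_mem_GE (X := Y) (Y := A⟦(-1 : ℤ)⟧)
      ⟨(shiftShiftNeg Y (1 : ℤ)).inv ≫ i⟦(-1 : ℤ)⟧',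
        r'⟦(-1 : ℤ)⟧' ≫ (shiftShiftNeg Y (1 : ℤ)).hom, ?_⟩ hA
    rw [Category.assoc, ← Category.assoc (i⟦(-1 : ℤ)⟧'), ← Functor.map_comp, hir,
      CategoryTheory.Functor.map_id, Category.id_comp, Iso.inv_hom_id]

/-- `C_{w≤0} = {}^⊥(C_{w≥1})`. -/
lemma mem_LE_iff (w : WeightStructure C) (X : C) :
    X ∈ w.LE ↔ ∀ Y ∈ w.GE, ∀ f : X ⟶ Y⟦(1 : ℤ)⟧, f = 0 := by
  constructor
  · exact fun hX Y hY f => w.orthogonal hX hY f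
  · intro h
    obtain ⟨B, A, f, g, δ, hT, hB, hA⟩ := w.exists_decomp X
    have hg : g = 0 := by
      have h0 := h (A⟦(-1 : ℤ)⟧) hA (g ≫ (shiftNegShift A (1 : ℤ)).inv)
      calc g = (g ≫ (shiftNegShift A (1 : ℤ)).inv) ≫ (shiftNegShift A (1 : ℤ)).hom := by
              rw [Category.assoc, Iso.inv_hom_id, Category.comp_id]
        _ = 0 := by rw [h0, Limits.zero_comp]
    obtain ⟨s, hs⟩ := Triangle.coyoneda_exact₂ _ hT (𝟙 _) (by rw [Category.id_comp]; exact hg)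
    exact w.retract_mem_LE ⟨s, f, hs.symm⟩ hB

end Aux

theorem stmt_6 {D : Type u₂} [Category.{v₂} D] [HasZeroObject D] [Preadditive D] [HasShift D ℤ]
    [∀ n : ℤ, (shiftFunctor D n).Additive] [Pretriangulated D]
    (w : WeightStructure C) (v : WeightStructure D)
    (F : C ⥤ D) (G : D ⥤ C) [F.CommShift ℤ] [F.IsTriangulated]
    [G.CommShift ℤ] [G.IsTriangulated] (adj : F ⊣ G) :
    (∀ X ∈ w.LE, F.obj X ∈ v.LE) ↔ (∀ Y ∈ v.GE, G.obj Y ∈ w.GE) := by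
  constructor
  · intro hF Y hY
    rw [mem_GE_iff]
    intro X hX f
    have e : G.obj (Y⟦(1 : ℤ)⟧) ≅ (G.obj Y)⟦(1 : ℤ)⟧ := G.commShiftIso (1 : ℤ) |>.app Y
    have h0 : (adj.homEquiv X (Y⟦(1 : ℤ)⟧)).symm (f ≫ e.inv) = 0 :=
      v.orthogonal (hF X hX) hY _
    have : f ≫ e.inv = 0 := by
      apply (adj.homEquiv X (Y⟦(1 : ℤ)⟧)).symm.injective
      rw [h0]
      simp [Adjunction.homEquiv_counit]
    calc f = (f ≫ e.inv) ≫ e.hom := by rw [Category.assoc, Iso.inv_hom_id, Category.comp_id]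
      _ = 0 := by rw [this, zero_comp]
  · intro hG X hX
    rw [mem_LE_iff]
    intro Y hY f
    have e : G.obj (Y⟦(1 : ℤ)⟧) ≅ (G.obj Y)⟦(1 : ℤ)⟧ := G.commShiftIso (1 : ℤ) |>.app Y
    have h0 : adj.homEquiv X (Y⟦(1 : ℤ)⟧) f ≫ e.hom = 0 :=
      w.orthogonal hX (hG Y hY) _
    have h1 : adj.homEquiv X (Y⟦(1 : ℤ)⟧) f = 0 := by
      calc adj.homEquiv X (Y⟦(1 : ℤ)⟧) f
          = (adj.homEquiv X (Y⟦(1 : ℤ)⟧) f ≫ e.hom) ≫ e.inv := by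
            rw [Category.assoc, Iso.hom_inv_id, Category.comp_id]
        _ = 0 := by rw [h0, zero_comp]
    have h2 := congrArg (adj.homEquiv X (Y⟦(1 : ℤ)⟧)).symm h1
    rw [Equiv.symm_apply_apply] at h2
    rw [h2]
    simp [Adjunction.homEquiv_counit]
end

section
/- Let C be a triangulated category with a weight structure w, H : C → A a homological functor into an abelian category A, M an object of C, and m ∈ ℤ. Then the subobject (W_m H)(M) := Im( H(w_{≤m}M) → H(M) ) of H(M) does not depend on the choice of the m-weight decomposition w_{≤m}M → M → w_{≥m+1}M. -/
open CategoryTheory CategoryTheory.Limits CategoryTheory.Pretriangulated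

universe v u v₂ u₂

variable (C : Type u) [Category.{v} C] [HasZeroObject C] [Preadditive C] [HasShift C ℤ]
  [∀ n : ℤ, (shiftFunctor C n).Additive] [Pretriangulated C]

variable {C}

/-- A functor from a triangulated category to an abelian category is homological if it converts
distinguished triangles into exact sequences. -/
def IsHomologicalFunctor {A : Type u₂} [Category.{v₂} A] [Abelian A] (F : C ⥤ A) : Prop :=
  ∀ (T : Triangle C), (T ∈ distTriang C) →
    ∃ (hzero : F.map T.mor₁ ≫ F.map T.mor₂ = 0),
      (ShortComplex.mk (F.map T.mor₁) (F.map T.mor₂) hzero).Exact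

lemma WeightStructure.hom_zero_s12 (w : WeightStructure C) {m : ℤ} {B A : C}
    (hB : B ∈ w.le m) (hA : A ∈ w.ge (m + 1)) (φ : B ⟶ A) : φ = 0 := by
  have e := (shiftFunctorAdd' C (-(m + 1)) 1 (-m) (by ring)).app A
  have hψ := w.orthogonal hB hA ((shiftFunctor C (-m)).map φ ≫ e.hom)
  apply (shiftFunctor C (-m)).map_injective
  rw [← cancel_mono e.hom, hψ, Functor.map_zero, Limits.zero_comp]

theorem stmt_12 (w : WeightStructure C) {A : Type u₂} [Category.{v₂} A] [Abelian A]
    (H : C ⥤ A) [H.Additive] (hH : IsHomologicalFunctor H) (M : C) (m : ℤ)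
    (B₁ A₁ : C) (f₁ : B₁ ⟶ M) (g₁ : M ⟶ A₁) (h₁ : A₁ ⟶ B₁⟦(1 : ℤ)⟧)
    (hT₁ : Triangle.mk f₁ g₁ h₁ ∈ distTriang C)
    (hB₁ : B₁ ∈ w.le m) (hA₁ : A₁ ∈ w.ge (m + 1))
    (B₂ A₂ : C) (f₂ : B₂ ⟶ M) (g₂ : M ⟶ A₂) (h₂ : A₂ ⟶ B₂⟦(1 : ℤ)⟧)
    (hT₂ : Triangle.mk f₂ g₂ h₂ ∈ distTriang C)
    (hB₂ : B₂ ∈ w.le m) (hA₂ : A₂ ∈ w.ge (m + 1)) :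
    imageSubobject (H.map f₁) = imageSubobject (H.map f₂) := by
  have key : ∀ (B B' A' : C) (f : B ⟶ M) (f' : B' ⟶ M) (g' : M ⟶ A') (h' : A' ⟶ B'⟦(1 : ℤ)⟧),
      (Triangle.mk f' g' h' ∈ distTriang C) → B ∈ w.le m → A' ∈ w.ge (m + 1) →
      imageSubobject (H.map f) ≤ imageSubobject (H.map f') := by
    intro B B' A' f f' g' h' hT hB hA'
    obtain ⟨φ, hφ⟩ := Triangle.coyoneda_exact₂ _ hT f (w.hom_zero_s12 hB hA' (f ≫ g'))
    calc imageSubobject (H.map f) = imageSubobject (H.map φ ≫ H.map f') := by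
          rw [hφ]; exact congrArg (fun g => imageSubobject g) (H.map_comp φ f')
      _ ≤ imageSubobject (H.map f') := imageSubobject_comp_le _ _
  exact le_antisymm (key B₁ B₂ A₂ f₁ f₂ g₂ h₂ hT₂ hB₁ hA₂)
    (key B₂ B₁ A₁ f₂ f₁ g₁ h₁ hT₁ hB₂ hA₁)
end

section
/- Let C be a triangulated category with a weight structure w, and let M be an object in the envelope of a class D ⊆ Ob C such that every element of D either lies in C_{w≥i} or lies in C_{w≤i−1}; write D = D_1 ∪ D_2 with D_1 ⊆ C_{w≥i} and D_2 ⊆ C_{w≤i−1}. If Hom(N, M) = 0 for every N ∈ D_2, then M ∈ C_{w≥i}. (Assume C is Karoubian.) -/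
open CategoryTheory CategoryTheory.Limits CategoryTheory.Pretriangulated

universe v u v₂ u₂

variable (C : Type u) [Category.{v} C] [HasZeroObject C] [Preadditive C] [HasShift C ℤ]
  [∀ n : ℤ, (shiftFunctor C n).Additive] [Pretriangulated C]

variable {C}

set_option linter.unusedSectionVars false

namespace Aux15

lemma retract_of_iso {X Y : C} (e : X ≅ Y) : IsRetract X Y := ⟨e.hom, e.inv, e.hom_inv_id⟩

lemma retract_trans {X Y Z : C} (h₁ : IsRetract X Y) (h₂ : IsRetract Y Z) : IsRetract X Z := by
  obtain ⟨i₁, r₁, h₁⟩ := h₁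
  obtain ⟨i₂, r₂, h₂⟩ := h₂
  exact ⟨i₁ ≫ i₂, r₂ ≫ r₁, by rw [Category.assoc, ← Category.assoc i₂, h₂, Category.id_comp, h₁]⟩

lemma retract_shift {X Y : C} (h : IsRetract X Y) (m : ℤ) : IsRetract (X⟦m⟧) (Y⟦m⟧) := by
  obtain ⟨i, r, hir⟩ := h
  refine ⟨i⟦m⟧', r⟦m⟧', ?_⟩
  rw [← Functor.map_comp, hir]
  exact (shiftFunctor C m).map_id X

variable (w : WeightStructure C)

lemma le_retract {X Y : C} (h : IsRetract X Y) {n : ℤ} (hY : Y ∈ w.le n) : X ∈ w.le n :=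
  w.retract_mem_LE (retract_shift h (-n)) hY

lemma ge_retract {X Y : C} (h : IsRetract X Y) {n : ℤ} (hY : Y ∈ w.ge n) : X ∈ w.ge n :=
  w.retract_mem_GE (retract_shift h (-n)) hY

lemma le_of_iso {X Y : C} (e : X ≅ Y) {n : ℤ} (hY : Y ∈ w.le n) : X ∈ w.le n :=
  le_retract w (retract_of_iso e) hY

lemma ge_of_iso {X Y : C} (e : X ≅ Y) {n : ℤ} (hY : Y ∈ w.ge n) : X ∈ w.ge n :=
  ge_retract w (retract_of_iso e) hY

lemma orth {n : ℤ} {B A : C} (hB : B ∈ w.le (n - 1)) (hA : A ∈ w.ge n) (f : B ⟶ A) : f = 0 := by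
  have hB' : B⟦(-(n - 1))⟧ ∈ w.LE := hB
  have hA' : A⟦(-n)⟧ ∈ w.GE := hA
  have e : A⟦(-(n-1))⟧ ≅ (A⟦(-n)⟧)⟦(1:ℤ)⟧ := (shiftFunctorAdd' C (-n) 1 (-(n-1)) (by ring)).app A
  have h0 := w.orthogonal hB' hA' (f⟦(-(n-1))⟧' ≫ e.hom)
  have h1 : f⟦(-(n-1))⟧' = 0 := by
    have := h0 =≫ e.inv
    simpa using this
  apply (shiftFunctor C (-(n-1))).map_injective
  rw [h1, Functor.map_zero]

lemma le_shift (m : ℤ) {n k : ℤ} (h : n + m = k) {X : C} (hX : X ∈ w.le n) : X⟦m⟧ ∈ w.le k := by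
  have e : (X⟦m⟧)⟦(-k)⟧ ≅ X⟦(-n)⟧ := ((shiftFunctorAdd' C m (-k) (-n) (by omega)).app X).symm
  exact w.retract_mem_LE (retract_of_iso e) hX

lemma ge_shift (m : ℤ) {n k : ℤ} (h : n + m = k) {X : C} (hX : X ∈ w.ge n) : X⟦m⟧ ∈ w.ge k := by
  have e : (X⟦m⟧)⟦(-k)⟧ ≅ X⟦(-n)⟧ := ((shiftFunctorAdd' C m (-k) (-n) (by omega)).app X).symm
  exact w.retract_mem_GE (retract_of_iso e) hX

lemma le_mono {n k : ℤ} (h : n + 1 = k) {X : C} (hX : X ∈ w.le n) : X ∈ w.le k := by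
  have e : X⟦(-k)⟧ ≅ (X⟦(-n)⟧)⟦(-1:ℤ)⟧ := (shiftFunctorAdd' C (-n) (-1) (-k) (by omega)).app X
  exact w.retract_mem_LE (retract_of_iso e) (w.shift_LE _ hX)

lemma zero_retract {Z Y : C} (hZ : IsZero Z) : IsRetract Z Y :=
  ⟨0, 0, by rw [comp_zero]; exact (hZ.eq_of_src _ _)⟩

lemma zero_le (n : ℤ) {Z : C} (hZ : IsZero Z) : Z ∈ w.le n := by
  obtain ⟨B, A, f, g, h, _, hB, _⟩ := w.exists_decomp Z
  have : IsZero (Z⟦(-n)⟧) := by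
    rw [IsZero.iff_id_eq_zero]
    have h1 : 𝟙 (Z⟦(-n)⟧) = (shiftFunctor C (-n)).map (𝟙 Z) := ((shiftFunctor C (-n)).map_id Z).symm
    rw [h1, hZ.eq_of_src (𝟙 Z) 0, Functor.map_zero]
  exact w.retract_mem_LE (zero_retract this) hB

lemma zero_ge (n : ℤ) {Z : C} (hZ : IsZero Z) : Z ∈ w.ge n := by
  obtain ⟨B, A, f, g, h, _, _, hA⟩ := w.exists_decomp Z
  have : IsZero (Z⟦(-n)⟧) := by
    rw [IsZero.iff_id_eq_zero]
    have h1 : 𝟙 (Z⟦(-n)⟧) = (shiftFunctor C (-n)).map (𝟙 Z) := ((shiftFunctor C (-n)).map_id Z).symm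
    rw [h1, hZ.eq_of_src (𝟙 Z) 0, Functor.map_zero]
  exact w.retract_mem_GE (zero_retract this) hA

/-- replace the middle object of a distinguished triangle by an isomorphic object -/
lemma dist_of_iso₂ {T : Triangle C} (hT : T ∈ distTriang C) {M : C} (e : T.obj₂ ≅ M) :
    Triangle.mk (T.mor₁ ≫ e.hom) (e.inv ≫ T.mor₂) T.mor₃ ∈ distTriang C := by
  refine isomorphic_distinguished _ hT _ ?_
  exact Triangle.isoMk _ _ (Iso.refl _) e.symm (Iso.refl _)
    (by change (T.mor₁ ≫ e.hom) ≫ e.inv = 𝟙 T.obj₁ ≫ T.mor₁; simp)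
    (by change (e.inv ≫ T.mor₂) ≫ 𝟙 T.obj₃ = e.inv ≫ T.mor₂; simp)
    (by change T.mor₃ ≫ (shiftFunctor C 1).map (𝟙 T.obj₁) = 𝟙 T.obj₃ ≫ T.mor₃; simp)

lemma decomp (n : ℤ) (M : C) :
    ∃ (B A : C) (u : B ⟶ M) (v : M ⟶ A) (d : A ⟶ B⟦(1:ℤ)⟧),
      (Triangle.mk u v d ∈ distTriang C) ∧ B ∈ w.le n ∧ A ∈ w.ge (n + 1) := by
  obtain ⟨B₀, A₀, f, g, h, hT, hB, hA⟩ := w.exists_decomp (M⟦(-n)⟧)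
  have hT₁ := Pretriangulated.Triangle.shift_distinguished _ hT n
  rw [Triangle.shiftFunctor_eq] at hT₁
  set T₁ := (Pretriangulated.Triangle.shiftFunctor C n).obj (Triangle.mk f g h) with hT₁def
  have e : T₁.obj₂ ≅ M := (shiftFunctorCompIsoId C (-n) n (by ring)).app M
  refine ⟨T₁.obj₁, T₁.obj₃, T₁.mor₁ ≫ e.hom, e.inv ≫ T₁.mor₂, T₁.mor₃,
    dist_of_iso₂ hT₁ e, ?_, ?_⟩
  · have e1 : (T₁.obj₁)⟦(-n)⟧ ≅ B₀ := (shiftFunctorCompIsoId C n (-n) (by ring)).app B₀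
    exact w.retract_mem_LE (retract_of_iso e1) hB
  · have e2 : (T₁.obj₃)⟦(-(n+1))⟧ ≅ A₀⟦(-1:ℤ)⟧ :=
      ((shiftFunctorAdd' C n (-(n+1)) (-1) (by omega)).app A₀).symm
    exact w.retract_mem_GE (retract_of_iso e2) hA

lemma mem_ge_of_orth {n : ℤ} {Y : C} (hY : ∀ B, B ∈ w.le (n - 1) → ∀ f : B ⟶ Y, f = 0) :
    Y ∈ w.ge n := by
  obtain ⟨B, A, u, v, d, hT, hB, hA⟩ := decomp w (n - 1) Y
  have hu : u = 0 := hY B hB u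
  obtain ⟨r, hr⟩ := Pretriangulated.Triangle.yoneda_exact₂ _ hT (𝟙 Y)
    (by change u ≫ 𝟙 Y = 0; rw [hu, zero_comp])
  have : Y ∈ w.ge (n - 1 + 1) := ge_retract w ⟨v, r, hr.symm⟩ hA
  rwa [show n - 1 + 1 = n by ring] at this

lemma le_ext {n : ℤ} (T : Triangle C) (hT : T ∈ distTriang C)
    (h₁ : T.obj₁ ∈ w.le n) (h₃ : T.obj₃ ∈ w.le n) : T.obj₂ ∈ w.le n := by
  obtain ⟨B, A, u, v, d, hT', hB, hA⟩ := decomp w n T.obj₂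
  have h₁' : T.obj₁ ∈ w.le (n + 1 - 1) := by rwa [show n + 1 - 1 = n by ring]
  have h₃' : T.obj₃ ∈ w.le (n + 1 - 1) := by rwa [show n + 1 - 1 = n by ring]
  have hv : v = 0 := by
    obtain ⟨g, hg⟩ := Pretriangulated.Triangle.yoneda_exact₂ _ hT v
      (orth w h₁' hA (T.mor₁ ≫ v))
    rw [hg, orth w h₃' hA g, comp_zero]
  obtain ⟨g, hg⟩ := Pretriangulated.Triangle.coyoneda_exact₂ _ hT' (𝟙 T.obj₂)
    (by change 𝟙 T.obj₂ ≫ v = 0; rw [hv, comp_zero])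
  exact le_retract w ⟨g, u, hg.symm⟩ hB

end Aux15

section DnUp

/-- shift a morphism `A ⟶ X⟦1⟧` down to `A⟦-1⟧ ⟶ X`. -/
noncomputable def dn {A X : C} (u : A ⟶ X⟦(1:ℤ)⟧) : A⟦(-1:ℤ)⟧ ⟶ X :=
  u⟦(-1:ℤ)⟧' ≫ (shiftFunctorCompIsoId C (1:ℤ) (-1:ℤ) (by ring)).hom.app X

/-- shift a morphism `A⟦-1⟧ ⟶ E` up to `A ⟶ E⟦1⟧`. -/
noncomputable def upm {A E : C} (v : A⟦(-1:ℤ)⟧ ⟶ E) : A ⟶ E⟦(1:ℤ)⟧ :=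
  (shiftFunctorCompIsoId C (-1:ℤ) (1:ℤ) (by ring)).inv.app A ≫ v⟦(1:ℤ)⟧'

lemma upm_comp {A E F : C} (v : A⟦(-1:ℤ)⟧ ⟶ E) (h : E ⟶ F) :
    upm (v ≫ h) = upm v ≫ h⟦(1:ℤ)⟧' := by
  simp [upm, Functor.map_comp]

lemma dn_comp_left {A B X : C} (g : A ⟶ B) (u : B ⟶ X⟦(1:ℤ)⟧) :
    dn (g ≫ u) = g⟦(-1:ℤ)⟧' ≫ dn u := by
  simp [dn, Functor.map_comp]

lemma dn_comp_right {A X Y : C} (u : A ⟶ X⟦(1:ℤ)⟧) (h : X ⟶ Y) :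
    dn (u ≫ h⟦(1:ℤ)⟧') = dn u ≫ h := by
  simp only [dn, Functor.map_comp, Category.assoc]
  congr 1
  exact (shiftFunctorCompIsoId C (1:ℤ) (-1:ℤ) (by ring)).hom.naturality h

lemma upm_dn {A X : C} (u : A ⟶ X⟦(1:ℤ)⟧) : upm (dn u) = u := by
  dsimp [upm, dn]
  rw [Functor.map_comp]
  rw [shift_shiftFunctorCompIsoId_hom_app (1:ℤ) (-1:ℤ) (by ring) X]
  have := (shiftFunctorCompIsoId C (-1:ℤ) (1:ℤ) (by ring)).inv.naturality u
  dsimp at this ⊢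
  rw [← Category.assoc, ← this, Category.assoc, Iso.inv_hom_id_app]
  simp

lemma dn_upm {A E : C} (v : A⟦(-1:ℤ)⟧ ⟶ E) : dn (upm v) = v := by
  dsimp [upm, dn]
  rw [Functor.map_comp]
  rw [shift_shiftFunctorCompIsoId_inv_app (-1:ℤ) (1:ℤ) (by ring) A]
  have := (shiftFunctorCompIsoId C (1:ℤ) (-1:ℤ) (by ring)).hom.naturality v
  dsimp at this ⊢
  rw [Category.assoc, this, ← Category.assoc, Iso.inv_hom_id_app]
  simp

lemma upm_zero {A E : C} : upm (0 : A⟦(-1:ℤ)⟧ ⟶ E) = 0 := by simp [upm]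

/-- the first morphism of the inverse rotation is `-dn mor₃` -/
lemma invRotate_mor₁ (T : Triangle C) : T.invRotate.mor₁ = -dn T.mor₃ := by
  dsimp [Triangle.invRotate, dn]
  rfl

end DnUp

namespace Aux15

open ZeroObject

lemma env_hom_zero {D₂ : Set C} {M : C} (horth : ∀ N ∈ D₂, ∀ f : N ⟶ M, f = 0) :
    ∀ {E : C}, Envelope D₂ E → ∀ h : E ⟶ M, h = 0 := by
  intro E hE
  induction hE with
  | of X hX => exact horth X hX
  | zero Z hZ => intro h; exact hZ.eq_of_src h 0
  | ext T hT h₁ h₃ ih₁ ih₃ =>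
      intro h
      obtain ⟨g, hg⟩ := Pretriangulated.Triangle.yoneda_exact₂ _ hT h (ih₁ _)
      rw [hg, ih₃ g, comp_zero]
  | retract X Y hr hY ih =>
      intro h
      obtain ⟨i, r, hir⟩ := hr
      rw [← Category.id_comp h, ← hir, Category.assoc, ih (r ≫ h), comp_zero]

/-- An object `Y` is good if it admits a weight-type decomposition whose lower part
belongs to the envelope of `D₂`. -/
def Good (w : WeightStructure C) (i : ℤ) (D₂ : Set C) (Y : C) : Prop :=
  ∃ (P Q : C) (u : P ⟶ Y) (v : Y ⟶ Q) (d : Q ⟶ P⟦(1:ℤ)⟧),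
    (Triangle.mk u v d ∈ distTriang C) ∧ Envelope D₂ P ∧ P ∈ w.le (i-1) ∧ Q ∈ w.ge i

variable (w : WeightStructure C) (i : ℤ) (D₂ : Set C)

lemma good_of_le {M : C} (hM : M ∈ w.le (i-1)) (henv : Envelope D₂ M) : Good w i D₂ M :=
  ⟨M, 0, 𝟙 M, 0, 0, contractible_distinguished M, henv, hM, zero_ge w i (isZero_zero C)⟩

lemma good_of_ge {M : C} (hM : M ∈ w.ge i) : Good w i D₂ M :=
  ⟨0, M, 0, 𝟙 M, 0, contractible_distinguished₁ M, Envelope.zero _ (isZero_zero C),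
    zero_le w _ (isZero_zero C), hM⟩

lemma good_of_zero {M : C} (hM : IsZero M) : Good w i D₂ M :=
  good_of_le w i D₂ (zero_le w _ hM) (Envelope.zero _ hM)

lemma retract_ext (T : Triangle C) (hT : T ∈ distTriang C) {Y₁ Y₃ : C}
    (h₁ : IsRetract T.obj₁ Y₁) (h₃ : IsRetract T.obj₃ Y₃) :
    ∃ (Y : C) (u : Y₁ ⟶ Y) (v : Y ⟶ Y₃) (d : Y₃ ⟶ Y₁⟦(1:ℤ)⟧),
      (Triangle.mk u v d ∈ distTriang C) ∧ IsRetract T.obj₂ Y := by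
  obtain ⟨i₁, r₁, hir₁⟩ := h₁
  obtain ⟨i₃, r₃, hir₃⟩ := h₃
  obtain ⟨Y, u, v, hTY⟩ := distinguished_cocone_triangle₂ (r₃ ≫ T.mor₃ ≫ i₁⟦(1:ℤ)⟧')
  obtain ⟨Φ, hΦ₁, hΦ₂⟩ : ∃ Φ : T.obj₂ ⟶ Y, T.mor₁ ≫ Φ = i₁ ≫ u ∧ T.mor₂ ≫ i₃ = Φ ≫ v :=
    complete_distinguished_triangle_morphism₂ T _ hT hTY i₁ i₃
    (by change T.mor₃ ≫ i₁⟦(1:ℤ)⟧' = i₃ ≫ (r₃ ≫ T.mor₃ ≫ i₁⟦(1:ℤ)⟧'); rw [← Category.assoc, hir₃, Category.id_comp])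
  obtain ⟨Ψ, hΨ₁, hΨ₂⟩ : ∃ Ψ : Y ⟶ T.obj₂, u ≫ Ψ = r₁ ≫ T.mor₁ ∧ v ≫ r₃ = Ψ ≫ T.mor₂ :=
    complete_distinguished_triangle_morphism₂ _ T hTY hT r₁ r₃
    (by change (r₃ ≫ T.mor₃ ≫ i₁⟦(1:ℤ)⟧') ≫ r₁⟦(1:ℤ)⟧' = r₃ ≫ T.mor₃
        rw [Category.assoc, Category.assoc, ← Functor.map_comp, hir₁]
        rw [(shiftFunctor C (1:ℤ)).map_id, Category.comp_id])
  have e2 : (Φ ≫ Ψ) ≫ T.mor₂ = T.mor₂ := by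
    rw [Category.assoc, ← hΨ₂, ← Category.assoc, ← hΦ₂, Category.assoc, hir₃, Category.comp_id]
  have e1 : T.mor₁ ≫ (Φ ≫ Ψ) = T.mor₁ := by
    rw [← Category.assoc, hΦ₁, Category.assoc, hΨ₁, ← Category.assoc, hir₁, Category.id_comp]
  have hn2 : (Φ ≫ Ψ - 𝟙 T.obj₂) ≫ T.mor₂ = 0 := by
    rw [Preadditive.sub_comp, e2, Category.id_comp, sub_self]
  obtain ⟨c, hc⟩ := Pretriangulated.Triangle.coyoneda_exact₂ _ hT _ hn2
  have hn1 : T.mor₁ ≫ (Φ ≫ Ψ - 𝟙 T.obj₂) = 0 := by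
    rw [Preadditive.comp_sub, e1, Category.comp_id, sub_self]
  have hnilp : (Φ ≫ Ψ - 𝟙 T.obj₂) ≫ (Φ ≫ Ψ - 𝟙 T.obj₂) = 0 := by
    calc (Φ ≫ Ψ - 𝟙 T.obj₂) ≫ (Φ ≫ Ψ - 𝟙 T.obj₂)
        = c ≫ (T.mor₁ ≫ (Φ ≫ Ψ - 𝟙 T.obj₂)) := by rw [hc, Category.assoc]
      _ = 0 := by rw [hn1, comp_zero]
  refine ⟨Y, u, v, _, hTY, Φ, Ψ ≫ (𝟙 T.obj₂ - (Φ ≫ Ψ - 𝟙 T.obj₂)), ?_⟩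
  have h9 : (Φ ≫ Ψ) ≫ (Φ ≫ Ψ - 𝟙 T.obj₂) = Φ ≫ Ψ - 𝟙 T.obj₂ := by
    have h10 : (Φ ≫ Ψ - 𝟙 T.obj₂) ≫ (Φ ≫ Ψ - 𝟙 T.obj₂)
        = (Φ ≫ Ψ) ≫ (Φ ≫ Ψ - 𝟙 T.obj₂) - (Φ ≫ Ψ - 𝟙 T.obj₂) := by
      rw [Preadditive.sub_comp, Category.id_comp]
    rw [hnilp] at h10
    exact (sub_eq_zero.mp h10.symm)
  rw [← Category.assoc, Preadditive.comp_sub, Category.comp_id, h9, sub_sub_cancel]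

end Aux15


namespace Aux15

lemma good_ext (w : WeightStructure C) (i : ℤ) (D₂ : Set C)
    (T : Triangle C) (hT : T ∈ distTriang C)
    (hX : Good w i D₂ T.obj₁) (hZ : Good w i D₂ T.obj₃) : Good w i D₂ T.obj₂ := by
  obtain ⟨P₁, Q₁, u₁, v₁, w₁, hT₁, hP₁env, hP₁le, hQ₁⟩ := hX
  obtain ⟨P₂, Q₂, u₂, v₂, w₂, hT₂, hP₂env, hP₂le, hQ₂⟩ := hZ
  -- the map `δ = upm n₀ : P₂ ⟶ P₁⟦1⟧`
  have hP₂d : (P₂⟦(-1:ℤ)⟧) ∈ w.le (i-1) :=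
    le_mono w (by ring) (le_shift w (-1) (by ring : (i-1) + (-1) = i-1-1) hP₂le)
  have hm : dn (u₂ ≫ T.mor₃) ≫ v₁ = 0 := orth w hP₂d hQ₁ _
  obtain ⟨n₀, hn₀⟩ : ∃ n₀ : P₂⟦(-1:ℤ)⟧ ⟶ P₁, dn (u₂ ≫ T.mor₃) = n₀ ≫ u₁ :=
    Pretriangulated.Triangle.coyoneda_exact₂ _ hT₁ (dn (u₂ ≫ T.mor₃)) hm
  obtain ⟨P, q₁, q₂, hTP⟩ := distinguished_cocone_triangle₂ (upm n₀)
  have hδ : upm n₀ ≫ u₁⟦(1:ℤ)⟧' = u₂ ≫ T.mor₃ := by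
    rw [← upm_comp, ← hn₀, upm_dn]
  obtain ⟨φ, hφ₁, hφ₂⟩ : ∃ φ : P ⟶ T.obj₂, q₁ ≫ φ = u₁ ≫ T.mor₁ ∧ q₂ ≫ u₂ = φ ≫ T.mor₂ :=
    complete_distinguished_triangle_morphism₂ _ T hTP hT u₁ u₂
    (by exact hδ)
  obtain ⟨Q, v, wq, hTQ⟩ := distinguished_cocone_triangle φ
  have hφv : φ ≫ v = 0 := comp_distTriang_mor_zero₁₂ _ hTQ
  have hwφ : wq ≫ φ⟦(1:ℤ)⟧' = 0 := comp_distTriang_mor_zero₃₁ _ hTQ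
  have hPenv : Envelope D₂ P := Envelope.ext _ hTP hP₁env hP₂env
  have hPle : P ∈ w.le (i-1) := le_ext w _ hTP hP₁le hP₂le
  -- (A) every map from `w.le (i-1)` to `T.obj₂` composes to zero with `v`
  have hA : ∀ (B : C), B ∈ w.le (i-1) → ∀ f' : B ⟶ T.obj₂, f' ≫ v = 0 := by
    intro B hB f'
    obtain ⟨g, hg⟩ : ∃ g : B ⟶ P₂, f' ≫ T.mor₂ = g ≫ u₂ :=
      Pretriangulated.Triangle.coyoneda_exact₂ _ hT₂ (f' ≫ T.mor₂)
      (orth w hB hQ₂ _)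
    have ho : (g ≫ upm n₀) ≫ u₁⟦(1:ℤ)⟧' = 0 := by
      rw [Category.assoc, hδ, ← Category.assoc, ← hg, Category.assoc,
        comp_distTriang_mor_zero₂₃ _ hT, comp_zero]
    obtain ⟨g', hg'⟩ : ∃ g' : B ⟶ Q₁, g ≫ upm n₀ = g' ≫ w₁ :=
      Pretriangulated.Triangle.coyoneda_exact₁ _ hT₁ (g ≫ upm n₀) ho
    have ho0 : g ≫ upm n₀ = 0 := by rw [hg', orth w hB hQ₁ g', zero_comp]
    obtain ⟨ψ, hψ⟩ : ∃ ψ : B ⟶ P, g = ψ ≫ q₂ :=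
      Pretriangulated.Triangle.coyoneda_exact₃ _ hTP g ho0
    have hd : (f' - ψ ≫ φ) ≫ T.mor₂ = 0 := by
      rw [Preadditive.sub_comp, Category.assoc, ← hφ₂, ← Category.assoc, ← hψ, ← hg, sub_self]
    obtain ⟨j, hj⟩ := Pretriangulated.Triangle.coyoneda_exact₂ _ hT _ hd
    obtain ⟨g₁, hg₁⟩ : ∃ g₁ : B ⟶ P₁, j = g₁ ≫ u₁ :=
      Pretriangulated.Triangle.coyoneda_exact₂ _ hT₁ j (orth w hB hQ₁ _)
    have hf' : f' = ψ ≫ φ + (g₁ ≫ q₁) ≫ φ := by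
      rw [hg₁, Category.assoc, ← hφ₁, ← Category.assoc] at hj
      rw [← sub_eq_iff_eq_add'.mp hj]
    rw [hf', Preadditive.add_comp, Category.assoc, Category.assoc, Category.assoc, hφv,
      comp_zero, comp_zero, comp_zero, add_zero]
  -- (B) `φ` is injective on maps from `w.le (i-1-1)`
  have hBinj : ∀ (B' : C), B' ∈ w.le (i-1-1) → ∀ uu : B' ⟶ P, uu ≫ φ = 0 → uu = 0 := by
    intro B' hB' uu hu
    have hQ₂d : Q₂⟦(-1:ℤ)⟧ ∈ w.ge (i-1) := ge_shift w (-1) (by ring) hQ₂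
    have h1 : (uu ≫ q₂) ≫ u₂ = 0 := by
      rw [Category.assoc, hφ₂, ← Category.assoc, hu, zero_comp]
    obtain ⟨s, hs⟩ : ∃ s : B' ⟶ Q₂⟦(-1:ℤ)⟧, uu ≫ q₂ = s ≫ (-dn w₂) :=
      Pretriangulated.Triangle.coyoneda_exact₂ _ (inv_rot_of_distTriang _ hT₂)
      (uu ≫ q₂) h1
    have h2 : uu ≫ q₂ = 0 := by rw [hs, orth w hB' hQ₂d s, zero_comp]
    obtain ⟨u', hu'⟩ : ∃ u' : B' ⟶ P₁, uu = u' ≫ q₁ :=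
      Pretriangulated.Triangle.coyoneda_exact₂ _ hTP uu h2
    have h3 : (u' ≫ u₁) ≫ T.mor₁ = 0 := by
      rw [Category.assoc, ← hφ₁, ← Category.assoc, ← hu', hu]
    obtain ⟨z, hz⟩ : ∃ z : B' ⟶ T.obj₃⟦(-1:ℤ)⟧, u' ≫ u₁ = z ≫ (-dn T.mor₃) :=
      Pretriangulated.Triangle.coyoneda_exact₂ _ (inv_rot_of_distTriang _ hT)
      (u' ≫ u₁) h3
    -- factor `z : B' ⟶ T.obj₃⟦-1⟧` through `u₂⟦-1⟧`
    have hT₂s := Pretriangulated.Triangle.shift_distinguished _ hT₂ (-1)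
    rw [Triangle.shiftFunctor_eq] at hT₂s
    have hzv : z ≫ ((-1:ℤ).negOnePow • v₂⟦(-1:ℤ)⟧') = 0 := by
      rw [Linear.comp_units_smul, orth w hB' hQ₂d (z ≫ v₂⟦(-1:ℤ)⟧'), smul_zero]
    obtain ⟨z'', hz''⟩ : ∃ z'' : B' ⟶ P₂⟦(-1:ℤ)⟧, z = z'' ≫ ((-1:ℤ).negOnePow • u₂⟦(-1:ℤ)⟧') :=
      Pretriangulated.Triangle.coyoneda_exact₂ _ hT₂s z (by exact hzv)
    have hz2 : z = ((-1:ℤ).negOnePow • z'') ≫ u₂⟦(-1:ℤ)⟧' := by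
      rw [Linear.units_smul_comp, ← Linear.comp_units_smul]
      exact hz''
    have h4 : u' ≫ u₁ = -(((-1:ℤ).negOnePow • z'') ≫ (n₀ ≫ u₁)) := by
      rw [hz]
      have : (Triangle.invRotate T).mor₁ = -dn T.mor₃ := invRotate_mor₁ T
      rw [Preadditive.comp_neg, hz2, Category.assoc, ← dn_comp_left, hn₀]
    have h5 : (u' + ((-1:ℤ).negOnePow • z'') ≫ n₀) ≫ u₁ = 0 := by
      rw [Preadditive.add_comp, Category.assoc, h4, neg_add_cancel]
    obtain ⟨y, hy⟩ : ∃ y : B' ⟶ Q₁⟦(-1:ℤ)⟧, u' + ((-1:ℤ).negOnePow • z'') ≫ n₀ = y ≫ (-dn w₁) :=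
      Pretriangulated.Triangle.coyoneda_exact₂ _ (inv_rot_of_distTriang _ hT₁)
      _ h5
    have hy0 : y = 0 := orth w hB' (ge_shift w (-1) (by ring) hQ₁) y
    have h6 : u' = -(((-1:ℤ).negOnePow • z'') ≫ n₀) := by
      have := hy
      rw [hy0, zero_comp] at this
      exact eq_neg_of_add_eq_zero_left this
    have h7 : dn (upm n₀) ≫ q₁ = 0 := by
      have h70 : (-dn (upm n₀)) ≫ q₁ = 0 := comp_distTriang_mor_zero₁₂ _ (inv_rot_of_distTriang _ hTP)
      rw [Preadditive.neg_comp, neg_eq_zero] at h70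
      exact h70
    have h8 : n₀ ≫ q₁ = 0 := by rwa [dn_upm] at h7
    rw [hu', h6, Preadditive.neg_comp, Category.assoc, h8, comp_zero, neg_zero]
  -- `Q ∈ w.ge i`
  have hQge : Q ∈ w.ge i := by
    apply mem_ge_of_orth w
    intro B hB f
    have hw0 : f ≫ wq = 0 := by
      have hdn : dn (f ≫ wq) ≫ φ = 0 := by
        rw [← dn_comp_right, Category.assoc, hwφ, comp_zero]
        simp [dn]
      have hBd : (B⟦(-1:ℤ)⟧) ∈ w.le (i-1-1) := le_shift w (-1) (by ring) hB
      have h0 := hBinj _ hBd (dn (f ≫ wq)) hdn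
      rw [← upm_dn (f ≫ wq), h0, upm_zero]
    obtain ⟨f', hf'⟩ : ∃ f' : B ⟶ T.obj₂, f = f' ≫ v :=
      Pretriangulated.Triangle.coyoneda_exact₃ _ hTQ f hw0
    rw [hf']
    exact hA B hB f'
  exact ⟨P, Q, φ, v, wq, hTQ, hPenv, hPle, hQge⟩

end Aux15


namespace Aux15

lemma main_ind (w : WeightStructure C) (i : ℤ) (D D₁ D₂ : Set C) (hD : D = D₁ ∪ D₂)
    (hD₁ : D₁ ⊆ w.ge i) (hD₂ : D₂ ⊆ w.le (i - 1)) :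
    ∀ M : C, Envelope D M → ∃ Y : C, IsRetract M Y ∧ Good w i D₂ Y := by
  intro M hM
  induction hM with
  | of X hX =>
      refine ⟨X, ⟨𝟙 X, 𝟙 X, by simp⟩, ?_⟩
      rw [hD] at hX
      rcases hX with h | h
      · exact good_of_ge w i D₂ (hD₁ h)
      · exact good_of_le w i D₂ (hD₂ h) (Envelope.of X h)
  | zero Z hZ => exact ⟨Z, ⟨𝟙 Z, 𝟙 Z, by simp⟩, good_of_zero w i D₂ hZ⟩
  | ext T hT h₁ h₃ ih₁ ih₃ =>
      obtain ⟨Y₁, hr₁, hg₁⟩ := ih₁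
      obtain ⟨Y₃, hr₃, hg₃⟩ := ih₃
      obtain ⟨Y, u, v, d, hTY, hret⟩ := retract_ext T hT hr₁ hr₃
      exact ⟨Y, hret, good_ext w i D₂ _ hTY hg₁ hg₃⟩
  | retract X Y hr hY ih =>
      obtain ⟨Y', hr', hg'⟩ := ih
      exact ⟨Y', retract_trans hr hr', hg'⟩

end Aux15


theorem stmt_15 (w : WeightStructure C) [IsIdempotentComplete C] (i : ℤ)
    (D D₁ D₂ : Set C) (hD : D = D₁ ∪ D₂)
    (hD₁ : D₁ ⊆ w.ge i) (hD₂ : D₂ ⊆ w.le (i - 1))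
    (M : C) (hM : Envelope D M)
    (horth : ∀ N ∈ D₂, ∀ f : N ⟶ M, f = 0) :
    M ∈ w.ge i := by
  obtain ⟨Y, ⟨ι, r, hir⟩, P, Q, u, v, d, hTY, hPenv, hPle, hQ⟩ :=
    Aux15.main_ind w i D D₁ D₂ hD hD₁ hD₂ M hM
  apply Aux15.mem_ge_of_orth w
  intro B hB f
  have h1 : (f ≫ ι) ≫ v = 0 := Aux15.orth w hB hQ _
  obtain ⟨g, hg⟩ : ∃ g : B ⟶ P, f ≫ ι = g ≫ u :=
    Pretriangulated.Triangle.coyoneda_exact₂ _ hTY (f ≫ ι) h1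
  have h2 : u ≫ r = 0 := Aux15.env_hom_zero horth hPenv (u ≫ r)
  calc f = (f ≫ ι) ≫ r := by rw [Category.assoc, hir, Category.comp_id]
    _ = g ≫ (u ≫ r) := by rw [hg, Category.assoc]
    _ = 0 := by rw [h2, comp_zero]
end
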